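/- Let h be a positive measurable function on [A, ∞) that is regularly varying of index ρ > 0. Define p(x) = h(x)·exp(-∫₀ˣ h(t) dt). Then for every λ > 1, p(λx)/p(x) < 1 for all sufficiently large x. -/

import Mathlib

open MeasureTheory Filter Set

/-- If `h` is positive, measurable, regularly varying of index `0 < ρ`,
and `p x = h x · exp(-∫₀ˣ h)`, then for every `λ > 1`, `p(λx)/p(x) < 1` for all
sufficiently large `x`. -/
theorem stmt_4
    (A : ℝ) (h : ℝ → ℝ) (hmeas : Measurable h)
    (hpos : ∀ x ≥ A, 0 < h x)
    (hint : ∀ x : ℝ, IntervalIntegrable h volume 0 x)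
    (ρ : ℝ) (hρ : 0 < ρ)
    (hRV : ∀ l : ℝ, 0 < l →
      Tendsto (fun x => h (l * x) / h x) atTop (nhds (l ^ ρ)))
    (p : ℝ → ℝ)
    (hp : ∀ x, p x = h x * Real.exp (-∫ t in (0:ℝ)..x, h t)) :
    ∀ l : ℝ, 1 < l → ∀ᶠ x in atTop, p (l * x) / p x < 1 := by
  intro l hl
  have hl0 : (0:ℝ) < l := lt_trans one_pos hl
  have hl1 : (1:ℝ) ≤ l := hl.le
  have hii : ∀ a b : ℝ, IntervalIntegrable h volume a b := fun a b =>
    (hint a).symm.trans (hint b)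
  have hlρ : (1:ℝ) < l ^ ρ := (Real.one_lt_rpow_iff_of_pos hl0).2 (Or.inl ⟨hl, hρ⟩)
  have hlρ0 : (0:ℝ) < l ^ ρ := lt_trans one_pos hlρ
  -- choose r with 1/l < r < l^ρ
  set r : ℝ := (l ^ ρ + 1 / l) / 2 with hr_def
  have hinvl : 1 / l < 1 := by
    rw [div_lt_one hl0]; exact hl
  have hr_lt : r < l ^ ρ := by
    rw [hr_def]; nlinarith
  have hr_pos : 0 < r := by
    have : (0:ℝ) < 1 / l := by positivity
    rw [hr_def]; nlinarith
  set c : ℝ := l * r - 1 with hc_def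
  have hc_pos : 0 < c := by
    have : 1 < l * r := by
      rw [hr_def]
      have : l * ((l ^ ρ + 1 / l) / 2) = (l * l ^ ρ + 1) / 2 := by
        field_simp
      rw [this]
      nlinarith
    rw [hc_def]; linarith
  -- eventual ratio bound
  obtain ⟨X₁, hX₁⟩ := eventually_atTop.1 ((hRV l hl0).eventually (eventually_gt_nhds hr_lt))
  set x₀ : ℝ := max X₁ (max A 0) with hx₀_def
  have hx₀A : A ≤ x₀ := le_trans (le_max_left _ _) (le_max_right _ _)
  have hx₀0 : (0:ℝ) ≤ x₀ := le_trans (le_max_right _ _) (le_max_right _ _)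
  have hposx : ∀ x, x₀ ≤ x → 0 < h x := fun x hx => hpos x (le_trans hx₀A hx)
  have hratio : ∀ x, x₀ ≤ x → r * h x ≤ h (l * x) := by
    intro x hx
    have h1 : r < h (l * x) / h x := hX₁ x (le_trans (le_max_left _ _) hx)
    have h2 : 0 < h x := hposx x hx
    rw [lt_div_iff₀ h2] at h1
    exact h1.le
  set I : ℝ → ℝ := fun x => ∫ t in x₀..x, h t with hI_def
  have hmono : ∀ a b : ℝ, x₀ ≤ a → a ≤ b → I a ≤ I b := by
    intro a b ha hab
    have hadd := intervalIntegral.integral_add_adjacent_intervals (hii x₀ a) (hii a b)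
    have hnn : 0 ≤ ∫ t in a..b, h t :=
      intervalIntegral.integral_nonneg hab (fun u hu => (hposx u (le_trans ha hu.1)).le)
    simp only [hI_def]
    linarith [hadd, hnn]
  -- growth: I (l*x) ≥ (1+c) * I x for x ≥ x₀
  have hgrow : ∀ x, x₀ ≤ x → (1 + c) * I x ≤ I (l * x) := by
    intro x hx
    have hx0 : (0:ℝ) ≤ x := le_trans hx₀0 hx
    -- integrability of t ↦ h (l*t) on [x₀, x]
    have hcomp : IntervalIntegrable (fun t => h (l * t)) volume x₀ x := by
      have := (hii (l * x₀) (l * x)).comp_mul_left (c := l)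
      rwa [mul_div_cancel_left₀ _ hl0.ne', mul_div_cancel_left₀ _ hl0.ne'] at this
    have hJ : ∫ t in x₀..x, l * h (l * t) = I (l * x) - I (l * x₀) := by
      have h1 : ∫ t in x₀..x, h (l * t) = l⁻¹ • ∫ t in l * x₀..l * x, h t :=
        intervalIntegral.integral_comp_mul_left h hl0.ne'
      have h2 : ∫ t in x₀..x, l * h (l * t) = l * ∫ t in x₀..x, h (l * t) := by
        rw [← intervalIntegral.integral_const_mul]
      have h3 : (∫ t in x₀..(l * x₀), h t) + ∫ t in (l * x₀)..(l * x), h t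
          = ∫ t in x₀..(l * x), h t :=
        intervalIntegral.integral_add_adjacent_intervals (hii _ _) (hii _ _)
      rw [h2, h1, smul_eq_mul, ← mul_assoc, mul_inv_cancel₀ hl0.ne', one_mul]
      simp only [hI_def]
      linarith
    have hmonoint : ∫ t in x₀..x, (1 + c) * h t ≤ ∫ t in x₀..x, l * h (l * t) := by
      apply intervalIntegral.integral_mono_on hx ((hii x₀ x).const_mul _)
        (hcomp.const_mul l)
      intro t ht
      have h1 := hratio t ht.1
      have : (1 + c) * h t = l * (r * h t) := by rw [hc_def]; ring
      rw [this]
      exact mul_le_mul_of_nonneg_left h1 hl0.le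
    have hconst : ∫ t in x₀..x, (1 + c) * h t = (1 + c) * I x := by
      rw [intervalIntegral.integral_const_mul]
    have hIlx₀ : 0 ≤ I (l * x₀) := by
      have := hmono x₀ (l * x₀) le_rfl (le_mul_of_one_le_left hx₀0 hl1)
      simpa only [hI_def, intervalIntegral.integral_same] using this
    linarith [hmonoint, hconst, hJ]
  -- positivity of I (x₀ + 1)
  have hIpos : 0 < I (x₀ + 1) := by
    apply intervalIntegral.intervalIntegral_pos_of_pos_on (hii _ _)
    · intro t ht
      exact hposx t ht.1.le
    · linarith
  -- iterated growth
  have hiter : ∀ n : ℕ, (1 + c) ^ n * I (x₀ + 1) ≤ I (l ^ n * (x₀ + 1)) := by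
    intro n
    induction n with
    | zero => simp
    | succ n ih =>
      have hbase : x₀ ≤ l ^ n * (x₀ + 1) := by
        have h1 : (1:ℝ) ≤ l ^ n := one_le_pow₀ hl1
        nlinarith
      have := hgrow _ hbase
      have heq : l * (l ^ n * (x₀ + 1)) = l ^ (n + 1) * (x₀ + 1) := by ring
      rw [heq] at this
      have h1c : (0:ℝ) ≤ 1 + c := by linarith
      calc (1 + c) ^ (n + 1) * I (x₀ + 1) = (1 + c) * ((1 + c) ^ n * I (x₀ + 1)) := by ring
        _ ≤ (1 + c) * I (l ^ n * (x₀ + 1)) := mul_le_mul_of_nonneg_left ih h1c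
        _ ≤ I (l ^ (n + 1) * (x₀ + 1)) := this
  -- divergence of I
  have hdiv : ∀ M : ℝ, ∀ᶠ x in atTop, M < I x := by
    intro M
    obtain ⟨n, hn⟩ := pow_unbounded_of_one_lt (M / I (x₀ + 1)) (by linarith : (1:ℝ) < 1 + c)
    have hM : M < (1 + c) ^ n * I (x₀ + 1) := by
      rw [div_lt_iff₀ hIpos] at hn; linarith
    rw [eventually_atTop]
    refine ⟨l ^ n * (x₀ + 1), fun x hx => ?_⟩
    have hbase : x₀ ≤ l ^ n * (x₀ + 1) := by
      have h1 : (1:ℝ) ≤ l ^ n := one_le_pow₀ hl1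
      nlinarith
    exact lt_of_lt_of_le (lt_of_lt_of_le hM (hiter n)) (hmono _ _ hbase hx)
  -- final assembly
  have hev1 : ∀ᶠ x in atTop, h (l * x) / h x < l ^ ρ + 1 :=
    (hRV l hl0).eventually (eventually_lt_nhds (by linarith))
  filter_upwards [hev1, hdiv (Real.log (l ^ ρ + 1) / c), eventually_ge_atTop x₀]
    with x hx1 hx2 hx3
  have hx0 : (0:ℝ) ≤ x := le_trans hx₀0 hx3
  have hhx : 0 < h x := hposx x hx3
  have hIlx : I x + ∫ t in x..(l * x), h t = I (l * x) :=
    intervalIntegral.integral_add_adjacent_intervals (hii _ _) (hii _ _)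
  set D : ℝ := ∫ t in x..(l * x), h t with hD_def
  have hDc : c * I x ≤ D := by
    have := hgrow x hx3
    simp only [hI_def] at hIlx this ⊢
    linarith
  have hDlog : Real.log (l ^ ρ + 1) < D := by
    have h1 : Real.log (l ^ ρ + 1) < c * I x := by
      rw [div_lt_iff₀ hc_pos] at hx2; linarith
    linarith
  have hexpD : l ^ ρ + 1 < Real.exp D := by
    calc l ^ ρ + 1 = Real.exp (Real.log (l ^ ρ + 1)) := by
          rw [Real.exp_log (by linarith)]
      _ < Real.exp D := Real.exp_lt_exp.2 hDlog
  have hGsplit : ∫ t in (0:ℝ)..(l * x), h t = (∫ t in (0:ℝ)..x, h t) + D := by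
    rw [hD_def, intervalIntegral.integral_add_adjacent_intervals (hint x) (hii _ _)]
  have hpratio : p (l * x) / p x = h (l * x) / h x * Real.exp (-D) := by
    rw [hp, hp, hGsplit, neg_add, Real.exp_add]
    have he1 : Real.exp (-∫ t in (0:ℝ)..x, h t) ≠ 0 := Real.exp_ne_zero _
    field_simp
  rw [hpratio, Real.exp_neg, ← div_eq_mul_inv, div_lt_one (Real.exp_pos _)]
  exact lt_trans hx1 hexpD
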